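/- Let S be a finite nonempty subset of ℝ², let l be a line (one-dimensional affine subspace) of ℝ², and let s₁ ∈ ℝ² be a point with s₁ ∉ l and s₁ ∉ S. Then there are at most two points x ∈ ℝ² such that dist(x,s₁) = infDist(x,l) = f_S(x). Equivalently, the curve of the space of circles consisting of the circles passing through s₁ and tangent to l (a parabola) intersects the upper envelope UE(S) in at most two points. -/
import Mathlib


noncomputable section

/-- The Euclidean plane. -/
abbrev Plane := EuclideanSpace ℝ (Fin 2)

namespace ParabolaAux

/-- `g β c e a` is (2β times… actually) the quantity `β‖x(a)-s₁‖² - β‖x(a)-q‖²`-style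
quadratic for the circle tangent to the axis through `s₁=(0,β)` at parameter `a`,
with `q=(c,e)`. -/
def g (β c e a : ℝ) : ℝ := (e - β)*a^2 + 2*β*c*a + β*(e*β - c^2 - e^2)

lemma core (β a₁ a₂ a₃ c e t₁ t₂ t₃ : ℝ) (hβ : 0 < β)
    (hne : ¬(c = 0 ∧ e = β))
    (h1 : g β c e a₁ = 0) (h2 : 0 ≤ g β c e a₂) (h3 : 0 ≤ g β c e a₃)
    (ht2 : 0 ≤ t₂) (ht3 : 0 ≤ t₃)
    (hv1 : t₁*(β^2 - a₁^2) + t₂*(β^2 - a₂^2) + t₃*(β^2 - a₃^2) = 0)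
    (hv2 : t₁*a₁ + t₂*a₂ + t₃*a₃ = 0)
    (hN : 0 < t₁*(a₁^2+β^2) + t₂*(a₂^2+β^2) + t₃*(a₃^2+β^2)) : False := by
  have hR : 0 < c^2 + (e-β)^2 := by
    rcases not_and_or.mp hne with h | h
    · have : 0 < c^2 := by positivity
      nlinarith [sq_nonneg (e-β)]
    · have : e - β ≠ 0 := sub_ne_zero.mpr h
      have : 0 < (e-β)^2 := by positivity
      nlinarith [sq_nonneg c]
  have key : t₁*(2*β*g β c e a₁) + t₂*(2*β*g β c e a₂) + t₃*(2*β*g β c e a₃)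
      = -(c^2+(e-β)^2) * (t₁*(a₁^2+β^2) + t₂*(a₂^2+β^2) + t₃*(a₃^2+β^2)) := by
    unfold g
    linear_combination (β^2-c^2-e^2)*hv1 + (4*β^2*c)*hv2
  rw [h1] at key
  have hL : 0 ≤ t₂*(2*β*g β c e a₂) + t₃*(2*β*g β c e a₃) := by
    have := mul_nonneg ht2 (by positivity : (0:ℝ) ≤ 2*β*g β c e a₂)
    have := mul_nonneg ht3 (by positivity : (0:ℝ) ≤ 2*β*g β c e a₃)
    linarith
  nlinarith [mul_pos hR hN]

/-- positive multiples of `v(x)` and `v(y)` equal implies `x = y`. -/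
lemma samedir (β x y p q : ℝ) (hβ : 0 < β) (hp : 0 < p) (hq : 0 < q)
    (h1 : p*(β^2 - x^2) = q*(β^2 - y^2)) (h2 : p*x = q*y) : x = y := by
  have key : (p - q) * (q*β^2 + p*x^2) = 0 := by
    linear_combination q*h1 + (p*x + q*y)*h2
  have hpos : 0 < q*β^2 + p*x^2 := by positivity
  have hpq : p = q := by
    rcases mul_eq_zero.mp key with h | h
    · linarith [sub_eq_zero.mp h]
    · linarith
  subst hpq
  exact mul_left_cancel₀ (ne_of_gt hp) h2

/-- If `s·v(x) + t·v(y) + r·v(z) = 0` with `s,t ≥ 0 > r` and `x,y,z` suitably distinct,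
then the weighted sum of norms is positive. -/
lemma Npos (β x y z s t r : ℝ) (hβ : 0 < β) (hs : 0 ≤ s) (ht : 0 ≤ t) (hr : r < 0)
    (hxz : x ≠ z) (hyz : y ≠ z)
    (hrel1 : s*(β^2 - x^2) + t*(β^2 - y^2) + r*(β^2 - z^2) = 0)
    (hrel2 : s*x + t*y + r*z = 0) :
    0 < s*(x^2+β^2) + t*(y^2+β^2) + r*(z^2+β^2) := by
  rcases eq_or_lt_of_le hs with hs0 | hs0
  · -- s = 0 : t v(y) = -r v(z)
    have hs0 : s = 0 := hs0.symm
    subst hs0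
    rcases eq_or_lt_of_le ht with ht0 | ht0
    · -- t = 0 too : r v(z) = 0, impossible
      exfalso
      have ht0 : t = 0 := ht0.symm
      subst ht0
      simp only [zero_mul, zero_add] at hrel1 hrel2
      have hz : z = 0 := by
        rcases mul_eq_zero.mp hrel2 with h | h
        · exact absurd h (ne_of_lt hr)
        · exact h
      rw [hz] at hrel1
      have : β^2 = 0 := by
        rcases mul_eq_zero.mp hrel1 with h | h
        · exact absurd h (ne_of_lt hr)
        · nlinarith
      nlinarith
    · exfalso
      have : t*(β^2 - y^2) = (-r)*(β^2 - z^2) := by linarith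
      have h2' : t*y = (-r)*z := by linarith
      exact hyz (samedir β y z t (-r) hβ ht0 (by linarith) this h2')
  rcases eq_or_lt_of_le ht with ht0 | ht0
  · -- t = 0 : s v(x) = -r v(z)
    exfalso
    have ht0 : t = 0 := ht0.symm
    subst ht0
    have : s*(β^2 - x^2) = (-r)*(β^2 - z^2) := by linarith
    have h2' : s*x = (-r)*z := by linarith
    exact hxz (samedir β x z s (-r) hβ hs0 (by linarith) this h2')
  -- s, t > 0 : strict Cauchy-Schwarz
  have hid : (s*(x^2+β^2) + t*(y^2+β^2))^2 - 4*β^2*s*t*(x-y)^2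
      - r^2*(z^2+β^2)^2 = 0 := by
    linear_combination (s*(β^2-x^2)+t*(β^2-y^2)-r*(β^2-z^2)) * hrel1
      + (4*β^2*(s*x+t*y-r*z)) * hrel2
  have hxy : x ≠ y := by
    intro h
    subst h
    -- then (s+t) v(x) = -r v(z): samedir
    have h1' : (s+t)*(β^2 - x^2) = (-r)*(β^2 - z^2) := by linarith
    have h2' : (s+t)*x = (-r)*z := by linarith
    exact hxz (samedir β x z (s+t) (-r) hβ (by linarith) (by linarith) h1' h2')
  have hxy2 : 0 < (x-y)^2 := by
    have : x - y ≠ 0 := sub_ne_zero.mpr hxy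
    positivity
  have h4 : 0 < 4*β^2*s*t*(x-y)^2 := by positivity
  have hstrict : r^2*(z^2+β^2)^2 < (s*(x^2+β^2) + t*(y^2+β^2))^2 := by linarith
  have hpos : 0 < s*(x^2+β^2) + t*(y^2+β^2) :=
    add_pos (mul_pos hs0 (by positivity)) (mul_pos ht0 (by positivity))
  have hA : 0 < -r*(z^2+β^2) := mul_pos (by linarith) (by positivity)
  nlinarith [hstrict, hA, hpos]

lemma sumpos (s t r n1 n2 n3 : ℝ) (hs : 0 ≤ s) (ht : 0 ≤ t) (hr : 0 ≤ r)
    (h1 : 0 < n1) (h2 : 0 < n2) (h3 : 0 < n3) (hnz : ¬(s = 0 ∧ t = 0 ∧ r = 0)) :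
    0 < s*n1 + t*n2 + r*n3 := by
  have hs' := mul_nonneg hs h1.le
  have ht' := mul_nonneg ht h2.le
  have hr' := mul_nonneg hr h3.le
  rcases hs.lt_or_eq with h | h
  · nlinarith [mul_pos h h1]
  rcases ht.lt_or_eq with h' | h'
  · nlinarith [mul_pos h' h2]
  rcases hr.lt_or_eq with h'' | h''
  · nlinarith [mul_pos h'' h3]
  exact absurd ⟨h.symm, h'.symm, h''.symm⟩ hnz

lemma key (β a₁ a₂ a₃ c₁ e₁ c₂ e₂ c₃ e₃ : ℝ) (hβ : 0 < β)
    (h12 : a₁ ≠ a₂) (h13 : a₁ ≠ a₃) (h23 : a₂ ≠ a₃)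
    (hne1 : ¬(c₁ = 0 ∧ e₁ = β)) (hne2 : ¬(c₂ = 0 ∧ e₂ = β)) (hne3 : ¬(c₃ = 0 ∧ e₃ = β))
    (g11 : g β c₁ e₁ a₁ = 0) (g12 : 0 ≤ g β c₁ e₁ a₂) (g13 : 0 ≤ g β c₁ e₁ a₃)
    (g22 : g β c₂ e₂ a₂ = 0) (g21 : 0 ≤ g β c₂ e₂ a₁) (g23 : 0 ≤ g β c₂ e₂ a₃)
    (g33 : g β c₃ e₃ a₃ = 0) (g31 : 0 ≤ g β c₃ e₃ a₁) (g32 : 0 ≤ g β c₃ e₃ a₂) :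
    False := by
  set T₁ : ℝ := (a₃ - a₂)*(β^2 + a₂*a₃) with hT1def
  set T₂ : ℝ := -((a₃ - a₁)*(β^2 + a₁*a₃)) with hT2def
  set T₃ : ℝ := (a₂ - a₁)*(β^2 + a₁*a₂) with hT3def
  have hn1 : (0:ℝ) < a₁^2 + β^2 := by positivity
  have hn2 : (0:ℝ) < a₂^2 + β^2 := by positivity
  have hn3 : (0:ℝ) < a₃^2 + β^2 := by positivity
  have hrel1 : T₁*(β^2 - a₁^2) + T₂*(β^2 - a₂^2) + T₃*(β^2 - a₃^2) = 0 := by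
    rw [hT1def, hT2def, hT3def]; ring
  have hrel2 : T₁*a₁ + T₂*a₂ + T₃*a₃ = 0 := by
    rw [hT1def, hT2def, hT3def]; ring
  have hTnz : ¬(T₁ = 0 ∧ T₂ = 0 ∧ T₃ = 0) := by
    rintro ⟨hz1, hz2, _⟩
    rw [hT1def] at hz1
    rw [hT2def] at hz2
    have hb1 : β^2 + a₂*a₃ = 0 := by
      rcases mul_eq_zero.mp hz1 with h | h
      · exact absurd (by linarith : a₂ = a₃) h23
      · exact h
    have hb2 : β^2 + a₁*a₃ = 0 := by
      have : (a₃ - a₁)*(β^2 + a₁*a₃) = 0 := by linarith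
      rcases mul_eq_zero.mp this with h | h
      · exact absurd (by linarith : a₁ = a₃) h13
      · exact h
    have ha3 : a₃ * (a₂ - a₁) = 0 := by linarith [hb1, hb2]; 
    rcases mul_eq_zero.mp ha3 with h | h
    · rw [h] at hb1; simp at hb1; nlinarith
    · exact h12 (by linarith)
  have hTnz' : ¬(-T₁ = 0 ∧ -T₂ = 0 ∧ -T₃ = 0) := by
    rintro ⟨z1, z2, z3⟩
    exact hTnz ⟨by linarith, by linarith, by linarith⟩
  rcases le_or_gt 0 T₁ with hT1 | hT1 <;> rcases le_or_gt 0 T₂ with hT2 | hT2 <;>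
    rcases le_or_gt 0 T₃ with hT3 | hT3
  · -- (+,+,+) : m = 1
    exact core β a₁ a₂ a₃ c₁ e₁ T₁ T₂ T₃ hβ hne1 g11 g12 g13 hT2 hT3 hrel1 hrel2
      (sumpos T₁ T₂ T₃ _ _ _ hT1 hT2 hT3 hn1 hn2 hn3 hTnz)
  · -- (+,+,−) : m = 3
    have hN := Npos β a₁ a₂ a₃ T₁ T₂ T₃ hβ hT1 hT2 hT3 h13 h23
      (by linear_combination hrel1) (by linear_combination hrel2)
    exact core β a₃ a₁ a₂ c₃ e₃ T₃ T₁ T₂ hβ hne3 g33 g31 g32 hT1 hT2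
      (by linear_combination hrel1) (by linear_combination hrel2) (by linarith)
  · -- (+,−,+) : m = 2
    have hN := Npos β a₁ a₃ a₂ T₁ T₃ T₂ hβ hT1 hT3 hT2 h12 h23.symm
      (by linear_combination hrel1) (by linear_combination hrel2)
    exact core β a₂ a₁ a₃ c₂ e₂ T₂ T₁ T₃ hβ hne2 g22 g21 g23 hT1 hT3
      (by linear_combination hrel1) (by linear_combination hrel2) (by linarith)
  · -- (+,−,−) : flip, m = 1
    have hN : 0 < (-T₁)*(a₁^2+β^2) + (-T₂)*(a₂^2+β^2) + (-T₃)*(a₃^2+β^2) := by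
      rcases hT1.lt_or_eq with h | h
      · have := Npos β a₂ a₃ a₁ (-T₂) (-T₃) (-T₁) hβ (by linarith) (by linarith)
          (by linarith) h12.symm h13.symm (by linear_combination -hrel1) (by linear_combination -hrel2)
        linarith
      · exact sumpos (-T₁) (-T₂) (-T₃) _ _ _ (by linarith) (by linarith) (by linarith)
          hn1 hn2 hn3 hTnz'
    exact core β a₁ a₂ a₃ c₁ e₁ (-T₁) (-T₂) (-T₃) hβ hne1 g11 g12 g13
      (by linarith) (by linarith) (by linear_combination -hrel1)
      (by linear_combination -hrel2) hN
  · -- (−,+,+) : m = 1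
    have hN := Npos β a₂ a₃ a₁ T₂ T₃ T₁ hβ hT2 hT3 hT1 h12.symm h13.symm
      (by linear_combination hrel1) (by linear_combination hrel2)
    exact core β a₁ a₂ a₃ c₁ e₁ T₁ T₂ T₃ hβ hne1 g11 g12 g13 hT2 hT3 hrel1 hrel2
      (by linarith)
  · -- (−,+,−) : flip, m = 2
    have hN : 0 < (-T₂)*(a₂^2+β^2) + (-T₁)*(a₁^2+β^2) + (-T₃)*(a₃^2+β^2) := by
      rcases hT2.lt_or_eq with h | h
      · have := Npos β a₁ a₃ a₂ (-T₁) (-T₃) (-T₂) hβ (by linarith) (by linarith)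
          (by linarith) h12 h23.symm (by linear_combination -hrel1)
          (by linear_combination -hrel2)
        linarith
      · have := sumpos (-T₁) (-T₂) (-T₃) _ _ _ (by linarith) (by linarith) (by linarith)
          hn1 hn2 hn3 hTnz'
        linarith
    exact core β a₂ a₁ a₃ c₂ e₂ (-T₂) (-T₁) (-T₃) hβ hne2 g22 g21 g23
      (by linarith) (by linarith) (by linear_combination -hrel1)
      (by linear_combination -hrel2) hN
  · -- (−,−,+) : flip, m = 3
    have hN : 0 < (-T₃)*(a₃^2+β^2) + (-T₁)*(a₁^2+β^2) + (-T₂)*(a₂^2+β^2) := by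
      rcases hT3.lt_or_eq with h | h
      · have := Npos β a₁ a₂ a₃ (-T₁) (-T₂) (-T₃) hβ (by linarith) (by linarith)
          (by linarith) h13 h23 (by linear_combination -hrel1)
          (by linear_combination -hrel2)
        linarith
      · have := sumpos (-T₁) (-T₂) (-T₃) _ _ _ (by linarith) (by linarith) (by linarith)
          hn1 hn2 hn3 hTnz'
        linarith
    exact core β a₃ a₁ a₂ c₃ e₃ (-T₃) (-T₁) (-T₂) hβ hne3 g33 g31 g32
      (by linarith) (by linarith) (by linear_combination -hrel1)
      (by linear_combination -hrel2) hN
  · -- (−,−,−) : flip all, m = 1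
    exact core β a₁ a₂ a₃ c₁ e₁ (-T₁) (-T₂) (-T₃) hβ hne1 g11 g12 g13
      (by linarith) (by linarith) (by linear_combination -hrel1)
      (by linear_combination -hrel2)
      (sumpos (-T₁) (-T₂) (-T₃) _ _ _ (by linarith) (by linarith) (by linarith)
        hn1 hn2 hn3 hTnz')

lemma dist_sq_coord (x y : Plane) : dist x y ^ 2 = (x 0 - y 0)^2 + (x 1 - y 1)^2 := by
  rw [EuclideanSpace.dist_eq, Real.sq_sqrt (by positivity)]
  simp [Fin.sum_univ_two, Real.dist_eq, sq_abs]

end ParabolaAux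

open ParabolaAux in
/-- The parabola of circles passing through a point `s₁` (not on `l`, not in `S`) and tangent
to a line `l` meets the upper envelope `UE(S)` (the graph of `f_S(x) = max_{p ∈ S} dist x p`)
in at most two points: at most two centers `x` satisfy
`dist x s₁ = infDist x l = f_S x`. -/
theorem parabola_meets_upper_envelope_at_most_twice
    (S : Finset Plane) (hS : S.Nonempty)
    (p v : Plane) (hv : v ≠ 0)
    (l : Set Plane) (hl : l = {y : Plane | ∃ t : ℝ, y = p + t • v})
    (s₁ : Plane) (hs₁l : s₁ ∉ l) (hs₁S : s₁ ∉ S) :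
    ∃ u w : Plane, ∀ x : Plane,
      dist x s₁ = S.sup' hS (fun q => dist x q) →
      Metric.infDist x l = S.sup' hS (fun q => dist x q) →
      x = u ∨ x = w := by
  classical
  -- normalize direction vector
  have hvn : ‖v‖ ≠ 0 := norm_ne_zero_iff.mpr hv
  set w : Plane := ‖v‖⁻¹ • v with hwdef
  have hwnorm : ‖w‖ = 1 := norm_smul_inv_norm hv
  have hl' : l = {y : Plane | ∃ t : ℝ, y = p + t • w} := by
    rw [hl]
    ext y
    constructor
    · rintro ⟨t, rfl⟩
      exact ⟨t * ‖v‖, by rw [hwdef, smul_smul, mul_assoc, mul_inv_cancel₀ hvn, mul_one]⟩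
    · rintro ⟨t, rfl⟩
      exact ⟨t * ‖v‖⁻¹, by rw [hwdef, smul_smul]⟩
  have hw2 : (w 0)^2 + (w 1)^2 = 1 := by
    have h := hwnorm
    rw [EuclideanSpace.norm_eq] at h
    have : (∑ i, ‖w i‖ ^ 2) = (w 0)^2 + (w 1)^2 := by
      simp [Fin.sum_univ_two, sq_abs]
    rw [this] at h
    nlinarith [Real.sq_sqrt (by positivity : (0:ℝ) ≤ (w 0)^2 + (w 1)^2), h]
  -- coordinates
  set A : Plane → ℝ := fun y => (y 0 - p 0) * w 0 + (y 1 - p 1) * w 1 with hAdef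
  set B0 : Plane → ℝ := fun y => -(y 0 - p 0) * w 1 + (y 1 - p 1) * w 0 with hB0def
  set ε : ℝ := if 0 ≤ B0 s₁ then 1 else -1 with hεdef
  have hε2 : ε^2 = 1 := by rw [hεdef]; split <;> norm_num
  set B : Plane → ℝ := fun y => ε * B0 y with hBdef
  have coord_dist : ∀ x y : Plane, dist x y ^ 2 = (A x - A y)^2 + (B x - B y)^2 := by
    intro x y
    rw [dist_sq_coord, hAdef, hBdef, hB0def]
    simp only
    linear_combination (-((x 0 - y 0)^2 + (x 1 - y 1)^2)) * hw2
      - (((-(x 0 - p 0) * w 1 + (x 1 - p 1) * w 0) - (-(y 0 - p 0) * w 1 + (y 1 - p 1) * w 0))^2) * hε2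
  have coord_inj : ∀ x y : Plane, A x = A y → B x = B y → x = y := by
    intro x y h1 h2
    have : dist x y ^ 2 = 0 := by rw [coord_dist, h1, h2]; ring
    have : dist x y = 0 := by nlinarith [dist_nonneg (x := x) (y := y)]
    exact dist_eq_zero.mp this
  -- coordinates of points on the line
  have hline_coord : ∀ t : ℝ, A (p + t • w) = t ∧ B (p + t • w) = 0 := by
    intro t
    have h0 : (p + t • w) 0 = p 0 + t * w 0 := rfl
    have h1 : (p + t • w) 1 = p 1 + t * w 1 := rfl
    constructor
    · rw [hAdef]; simp only [h0, h1]; linear_combination t * hw2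
    · rw [hBdef, hB0def]; simp only [h0, h1]; ring
  have hlne : l.Nonempty := ⟨p, by rw [hl']; exact ⟨0, by simp⟩⟩
  -- infDist formula
  have hinf : ∀ x : Plane, Metric.infDist x l = |B x| := by
    intro x
    apply le_antisymm
    · have hmem : p + (A x) • w ∈ l := by rw [hl']; exact ⟨A x, rfl⟩
      have hdist : dist x (p + (A x) • w) = |B x| := by
        have h := coord_dist x (p + (A x) • w)
        rw [(hline_coord (A x)).1, (hline_coord (A x)).2] at h
        have h' : dist x (p + (A x) • w) ^ 2 = (B x)^2 := by rw [h]; ring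
        calc dist x (p + (A x) • w) = √(dist x (p + (A x) • w) ^ 2) :=
              (Real.sqrt_sq dist_nonneg).symm
          _ = √((B x)^2) := by rw [h']
          _ = |B x| := Real.sqrt_sq_eq_abs _
      rw [← hdist]
      exact Metric.infDist_le_dist_of_mem hmem
    · refine le_of_not_gt fun hlt => ?_
      obtain ⟨y, hy, hylt⟩ := (Metric.infDist_lt_iff hlne).mp hlt
      rw [hl'] at hy
      obtain ⟨t, rfl⟩ := hy
      have h := coord_dist x (p + t • w)
      rw [(hline_coord t).1, (hline_coord t).2] at h
      have h2 : (B x)^2 ≤ dist x (p + t • w) ^ 2 := by rw [h]; nlinarith [sq_nonneg (A x - t)]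
      have : |B x| ≤ dist x (p + t • w) := by
        calc |B x| = √((B x)^2) := (Real.sqrt_sq_eq_abs _).symm
          _ ≤ √(dist x (p + t • w)^2) := Real.sqrt_le_sqrt h2
          _ = dist x (p + t • w) := Real.sqrt_sq dist_nonneg
      linarith
  -- s₁ not on line : B s₁ ≠ 0
  have hBs₁ : B0 s₁ ≠ 0 := by
    intro h0
    apply hs₁l
    have : s₁ = p + (A s₁) • w := by
      apply coord_inj
      · exact ((hline_coord (A s₁)).1).symm
      · rw [(hline_coord (A s₁)).2]
        show ε * B0 s₁ = 0
        rw [h0, mul_zero]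
    rw [hl', this]
    exact ⟨A s₁, rfl⟩
  set β : ℝ := B s₁ with hβdef
  have hβ : 0 < β := by
    rw [hβdef, hBdef, hεdef]
    rcases le_or_gt 0 (B0 s₁) with h | h
    · simp only [if_pos h, one_mul]
      exact lt_of_le_of_ne h (Ne.symm hBs₁)
    · simp only [if_neg (not_le.mpr h)]
      nlinarith
  -- the solution predicate
  set F : Plane → ℝ := fun x => S.sup' hS (fun q => dist x q) with hFdef
  set Sol : Plane → Prop := fun x => dist x s₁ = F x ∧ Metric.infDist x l = F x with hSdef
  -- basic facts about solutions
  have hsol_b : ∀ x : Plane, Sol x →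
      2*β*(B x) = (A x - A s₁)^2 + β^2 := by
    intro x hx
    have hd : dist x s₁ = |B x| := by rw [hx.1, ← hx.2, hinf]
    have hsq : dist x s₁ ^ 2 = (B x)^2 := by rw [hd, sq_abs]
    have h := coord_dist x s₁
    rw [hsq, ← hβdef] at h
    linear_combination h
  have hsol_g : ∀ x : Plane, Sol x → ∀ q : Plane,
      g β (A q - A s₁) (B q) (A x - A s₁) = β * (dist x s₁ ^ 2 - dist x q ^ 2) := by
    intro x hx q
    have hb := hsol_b x hx
    have h1 := coord_dist x s₁
    have h2 := coord_dist x q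
    rw [← hβdef] at h1
    unfold g
    linear_combination (-β) * h1 + β * h2 + (β - B q) * hb
  -- injectivity of the parameter on solutions
  have hsol_inj : ∀ x y : Plane, Sol x → Sol y → A x = A y → x = y := by
    intro x y hx hy hA
    have hbx := hsol_b x hx
    have hby := hsol_b y hy
    have : B x = B y := by
      have : 2*β*(B x) = 2*β*(B y) := by rw [hbx, hby, hA]
      have h2β : (2:ℝ)*β ≠ 0 := by positivity
      exact mul_left_cancel₀ h2β this
    exact coord_inj x y hA this
  -- distinctness of (c,e) data from s₁
  have hqne : ∀ q ∈ S, ¬(A q - A s₁ = 0 ∧ B q = β) := by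
    rintro q hq ⟨h1, h2⟩
    apply hs₁S
    have : q = s₁ := coord_inj q s₁ (by linarith) (by rw [h2, hβdef])
    rwa [← this]
  -- no three distinct solutions
  have key3 : ∀ x y z : Plane, Sol x → Sol y → Sol z → x = y ∨ x = z ∨ y = z := by
    intro x y z hx hy hz
    by_contra hcon
    push_neg at hcon
    obtain ⟨hxy, hxz, hyz⟩ := hcon
    have haxy : A x - A s₁ ≠ A y - A s₁ := fun h =>
      hxy (hsol_inj x y hx hy (by linarith))
    have haxz : A x - A s₁ ≠ A z - A s₁ := fun h =>
      hxz (hsol_inj x z hx hz (by linarith))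
    have hayz : A y - A s₁ ≠ A z - A s₁ := fun h =>
      hyz (hsol_inj y z hy hz (by linarith))
    obtain ⟨qx, hqxS, hqx⟩ := S.exists_mem_eq_sup' hS (fun q => dist x q)
    obtain ⟨qy, hqyS, hqy⟩ := S.exists_mem_eq_sup' hS (fun q => dist y q)
    obtain ⟨qz, hqzS, hqz⟩ := S.exists_mem_eq_sup' hS (fun q => dist z q)
    have hle : ∀ (u : Plane), Sol u → ∀ q ∈ S, dist u q ≤ dist u s₁ := by
      intro u hu q hq
      rw [hu.1]
      exact Finset.le_sup' (fun q => dist u q) hq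
    have hwit : ∀ (u : Plane) (qu : Plane), Sol u → F u = dist u qu →
        g β (A qu - A s₁) (B qu) (A u - A s₁) = 0 := by
      intro u qu hu hq
      rw [hsol_g u hu qu, hu.1, ← hq]
      ring
    have hge : ∀ (u : Plane), Sol u → ∀ q ∈ S,
        0 ≤ g β (A q - A s₁) (B q) (A u - A s₁) := by
      intro u hu q hq
      rw [hsol_g u hu q]
      have := hle u hu q hq
      have h2 : dist u q ^ 2 ≤ dist u s₁ ^ 2 := by
        have := dist_nonneg (x := u) (y := q)
        nlinarith
      nlinarith
    exact key β (A x - A s₁) (A y - A s₁) (A z - A s₁)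
      (A qx - A s₁) (B qx) (A qy - A s₁) (B qy) (A qz - A s₁) (B qz) hβ
      haxy haxz hayz (hqne qx hqxS) (hqne qy hqyS) (hqne qz hqzS)
      (hwit x qx hx hqx) (hge y hy qx hqxS) (hge z hz qx hqxS)
      (hwit y qy hy hqy) (hge x hx qy hqyS) (hge z hz qy hqyS)
      (hwit z qz hz hqz) (hge x hx qz hqzS) (hge y hy qz hqzS)
  -- assemble
  by_cases h1 : ∃ x : Plane, Sol x
  · obtain ⟨x₀, hx₀⟩ := h1
    by_cases h2 : ∃ y : Plane, Sol y ∧ y ≠ x₀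
    · obtain ⟨y₀, hy₀, hy₀ne⟩ := h2
      refine ⟨x₀, y₀, fun z hz1 hz2 => ?_⟩
      rcases key3 z x₀ y₀ ⟨hz1, hz2⟩ hx₀ hy₀ with h | h | h
      · exact Or.inl h
      · exact Or.inr h
      · exact absurd h.symm hy₀ne
    · push_neg at h2
      refine ⟨x₀, x₀, fun z hz1 hz2 => Or.inl (h2 z ⟨hz1, hz2⟩)⟩
  · refine ⟨s₁, s₁, fun z hz1 hz2 => absurd ⟨z, hz1, hz2⟩ h1⟩
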